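/- Assume F : π → Matrix (Fin n) (Fin n) ℂ is bounded and satisfies condition (1.4): there exist a finite set S ⊆ π and C > 0 such that for every g ∉ S the matrix F g is invertible and ‖(F g)⁻¹‖ ≤ C. Then the multiplication operator Φ_F on H = ℓ²(π; ℂⁿ) is invertible modulo compact operators: there exists a bounded operator Ψ : H →L[ℂ] H such that Φ_F ∘ Ψ − id and Ψ ∘ Φ_F − id are compact. In particular Φ_F is a Fredholm operator. -/

import Mathlib

open scoped Matrix.Norms.L2Operator

namespace MultFredholmAux


variable {π : Type*} {n : ℕ}

local notation "H" => lp (fun _ : π => EuclideanSpace ℂ (Fin n)) 2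

noncomputable def mv (A : Matrix (Fin n) (Fin n) ℂ) (x : EuclideanSpace ℂ (Fin n)) :
    EuclideanSpace ℂ (Fin n) :=
  (EuclideanSpace.equiv (Fin n) ℂ).symm (A.mulVec x)

lemma mv_eq (A : Matrix (Fin n) (Fin n) ℂ) (x : EuclideanSpace ℂ (Fin n)) :
    mv A x = A.mulVec x := rfl

lemma mulVec_norm_le (A : Matrix (Fin n) (Fin n) ℂ) (x : EuclideanSpace ℂ (Fin n)) :
    ‖mv A x‖ ≤ ‖A‖ * ‖x‖ :=
  A.l2_opNorm_mulVec x

lemma memℓp_mul (G : π → Matrix (Fin n) (Fin n) ℂ) {C : ℝ} (hC : 0 ≤ C)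
    (hG : ∀ g, ‖G g‖ ≤ C) (ξ : H) :
    Memℓp (fun g => mv (G g) (ξ g)) 2 := by
  apply memℓp_gen
  have hsum : Summable fun g : π => ‖ξ g‖ ^ (2 : ENNReal).toReal :=
    (lp.memℓp ξ).summable (by norm_num)
  refine Summable.of_nonneg_of_le (fun g => Real.rpow_nonneg (norm_nonneg _) _)
    (fun g => ?_) (hsum.mul_left (C ^ (2 : ENNReal).toReal))
  have h1 : ‖mv (G g) (ξ g)‖ ≤ C * ‖ξ g‖ :=
    (mulVec_norm_le _ _).trans (mul_le_mul_of_nonneg_right (hG g) (norm_nonneg _))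
  calc ‖mv (G g) (ξ g)‖ ^ (2 : ENNReal).toReal
      ≤ (C * ‖ξ g‖) ^ (2 : ENNReal).toReal :=
        Real.rpow_le_rpow (norm_nonneg _) h1 (by norm_num)
    _ = C ^ (2 : ENNReal).toReal * ‖ξ g‖ ^ (2 : ENNReal).toReal :=
        Real.mul_rpow hC (norm_nonneg _)

noncomputable def mulOpL (G : π → Matrix (Fin n) (Fin n) ℂ) {C : ℝ} (hC : 0 ≤ C)
    (hG : ∀ g, ‖G g‖ ≤ C) : H →L[ℂ] H :=
  LinearMap.mkContinuous
    { toFun := fun ξ => (⟨fun g => mv (G g) (ξ g),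
        by exact memℓp_mul G hC hG ξ⟩ : H)
      map_add' := fun ξ η => by
        apply lp.ext
        funext g
        have h1 : (ξ + η) g = ξ g + η g := by rw [lp.coeFn_add]; rfl
        show mv (G g) ((ξ + η) g) = mv (G g) (ξ g) + mv (G g) (η g)
        rw [h1]
        simp only [mv, WithLp.ofLp_add, Matrix.mulVec_add, map_add]
      map_smul' := fun c ξ => by
        apply lp.ext
        funext g
        have h1 : (c • ξ) g = c • ξ g := by rw [lp.coeFn_smul]; rfl
        show mv (G g) ((c • ξ) g) = c • mv (G g) (ξ g)
        rw [h1]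
        simp only [mv, WithLp.ofLp_smul, Matrix.mulVec_smul, map_smul] }
    C
    (fun ξ => by
      refine lp.norm_le_of_tsum_le (p := 2) (by norm_num)
        (mul_nonneg hC (norm_nonneg _)) ?_
      have hsum : Summable fun g : π => ‖ξ g‖ ^ (2 : ENNReal).toReal :=
        (lp.memℓp ξ).summable (by norm_num)
      have hle : ∀ g : π, ‖mv (G g) (ξ g)‖ ^ (2 : ENNReal).toReal
          ≤ C ^ (2 : ENNReal).toReal * ‖ξ g‖ ^ (2 : ENNReal).toReal := by
        intro g
        have h1 : ‖mv (G g) (ξ g)‖ ≤ C * ‖ξ g‖ :=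
          (mulVec_norm_le _ _).trans (mul_le_mul_of_nonneg_right (hG g) (norm_nonneg _))
        calc ‖mv (G g) (ξ g)‖ ^ (2 : ENNReal).toReal
            ≤ (C * ‖ξ g‖) ^ (2 : ENNReal).toReal :=
              Real.rpow_le_rpow (norm_nonneg _) h1 (by norm_num)
          _ = _ := Real.mul_rpow hC (norm_nonneg _)
      have hsum2 := (memℓp_mul G hC hG ξ).summable (p := 2) (by norm_num)
      calc (∑' g : π, ‖mv (G g) (ξ g)‖ ^ (2 : ENNReal).toReal)
          ≤ ∑' g : π, C ^ (2 : ENNReal).toReal * ‖ξ g‖ ^ (2 : ENNReal).toReal :=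
            Summable.tsum_le_tsum hle hsum2 (hsum.mul_left _)
        _ = C ^ (2 : ENNReal).toReal * ∑' g : π, ‖ξ g‖ ^ (2 : ENNReal).toReal := tsum_mul_left
        _ = C ^ (2 : ENNReal).toReal * ‖ξ‖ ^ (2 : ENNReal).toReal := by
            rw [lp.norm_rpow_eq_tsum (by norm_num) ξ]
        _ = (C * ‖ξ‖) ^ (2 : ENNReal).toReal :=
            (Real.mul_rpow hC (norm_nonneg _)).symm)

@[simp] lemma mulOpL_apply (G : π → Matrix (Fin n) (Fin n) ℂ) {C : ℝ} (hC : 0 ≤ C)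
    (hG : ∀ g, ‖G g‖ ≤ C) (ξ : H) (g : π) :
    mulOpL G hC hG ξ g = mv (G g) (ξ g) := rfl

section Single
variable [DecidableEq π]

lemma single_add (g : π) (a b : EuclideanSpace ℂ (Fin n)) :
    (lp.single 2 g (a + b) : H) = lp.single 2 g a + lp.single 2 g b := by
  apply lp.ext
  funext j
  by_cases h : j = g
  · subst h
    simp only [lp.single_apply_self, lp.coeFn_add, Pi.add_apply]
  · simp only [lp.single_apply_ne _ _ _ h, lp.coeFn_add, Pi.add_apply,
      lp.single_apply_ne _ _ _ h, add_zero]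

lemma single_sub (g : π) (a b : EuclideanSpace ℂ (Fin n)) :
    (lp.single 2 g (a - b) : H) = lp.single 2 g a - lp.single 2 g b := by
  rw [sub_eq_add_neg, single_add, lp.single_neg, sub_eq_add_neg]

lemma norm_single' (g : π) (a : EuclideanSpace ℂ (Fin n)) :
    ‖(lp.single 2 g a : H)‖ = ‖a‖ :=
  lp.norm_single (E := fun _ : π => EuclideanSpace ℂ (Fin n)) (p := 2) (by norm_num) g a

lemma continuous_single (g : π) :
    Continuous (fun a : EuclideanSpace ℂ (Fin n) => (lp.single 2 g a : H)) := by
  refine (LipschitzWith.of_dist_le_mul (K := 1) fun a b => ?_).continuous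
  rw [dist_eq_norm, dist_eq_norm, ← single_sub, norm_single']
  simp

lemma isCompactOperator_singleEval (g : π) :
    IsCompactOperator (fun ξ : H => (lp.single 2 g (ξ g) : H)) := by
  refine ⟨(fun a : EuclideanSpace ℂ (Fin n) => (lp.single 2 g a : H)) ''
    Metric.closedBall 0 1, (isCompact_closedBall 0 1).image (continuous_single g), ?_⟩
  refine Filter.mem_of_superset (Metric.closedBall_mem_nhds 0 one_pos) fun ξ hξ => ?_
  refine ⟨ξ g, ?_, rfl⟩
  rw [Metric.mem_closedBall, dist_zero_right]
  exact (lp.norm_apply_le_norm (by norm_num) ξ g).trans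
    (by simpa using Metric.mem_closedBall.mp hξ)

lemma isCompactOperator_sumSingle (S : Finset π) :
    IsCompactOperator (fun ξ : H => ∑ g ∈ S, (lp.single 2 g (ξ g) : H)) := by
  classical
  induction S using Finset.induction with
  | empty => exact isCompactOperator_zero
  | @insert a S ha ih =>
      have := (isCompactOperator_singleEval (π := π) (n := n) a).add ih
      simp only [Finset.sum_insert ha]
      exact this

end Single

end MultFredholmAux



set_option maxHeartbeats 1000000 in
/-- If `F : π → Matrix (Fin n) (Fin n) ℂ` is bounded and satisfies condition
(1.4) (invertibility with uniformly bounded inverse outside a finite set), then the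
block-diagonal multiplication operator `Φ_F` on `ℓ²(π; ℂⁿ)` is invertible modulo compact
operators, i.e. it is a Fredholm operator. -/
theorem multiplication_operator_fredholm
    {π : Type*} [Group π] {n : ℕ}
    (F : π → Matrix (Fin n) (Fin n) ℂ)
    (hbd : ∃ C : ℝ, ∀ g : π, ‖F g‖ ≤ C)
    (h14 : ∃ (S : Finset π) (C : ℝ), 0 < C ∧
      ∀ g ∉ S, IsUnit (F g) ∧ ‖(F g)⁻¹‖ ≤ C)
    (Φ : lp (fun _ : π => EuclideanSpace ℂ (Fin n)) 2 →L[ℂ]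
         lp (fun _ : π => EuclideanSpace ℂ (Fin n)) 2)
    (hΦ : ∀ (ξ : lp (fun _ : π => EuclideanSpace ℂ (Fin n)) 2) (g : π),
      Φ ξ g = (F g).mulVec (ξ g)) :
    ∃ Ψ : lp (fun _ : π => EuclideanSpace ℂ (Fin n)) 2 →L[ℂ]
          lp (fun _ : π => EuclideanSpace ℂ (Fin n)) 2,
      IsCompactOperator (Φ ∘L Ψ - ContinuousLinearMap.id ℂ (lp (fun _ : π => EuclideanSpace ℂ (Fin n)) 2)) ∧
      IsCompactOperator (Ψ ∘L Φ - ContinuousLinearMap.id ℂ (lp (fun _ : π => EuclideanSpace ℂ (Fin n)) 2)) := by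
  classical
  obtain ⟨S, C, hCpos, hS⟩ := h14
  set G : π → Matrix (Fin n) (Fin n) ℂ := fun g => if g ∈ S then 0 else (F g)⁻¹ with hGdef
  have hGbd : ∀ g, ‖G g‖ ≤ C := by
    intro g
    by_cases h : g ∈ S
    · simp only [hGdef, if_pos h, norm_zero]
      exact hCpos.le
    · simp only [hGdef, if_neg h]
      exact (hS g h).2
  refine ⟨MultFredholmAux.mulOpL G hCpos.le hGbd, ?_, ?_⟩
  · have hkey : ⇑(Φ ∘L MultFredholmAux.mulOpL G hCpos.le hGbd -
        ContinuousLinearMap.id ℂ (lp (fun _ : π => EuclideanSpace ℂ (Fin n)) 2)) =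
        fun ξ => -∑ g ∈ S, lp.single 2 g (ξ g) := by
      funext ξ
      apply lp.ext
      funext g
      apply WithLp.ofLp_injective 2
      have hL : (Φ ∘L MultFredholmAux.mulOpL G hCpos.le hGbd -
          ContinuousLinearMap.id ℂ (lp (fun _ : π => EuclideanSpace ℂ (Fin n)) 2)) ξ =
          Φ (MultFredholmAux.mulOpL G hCpos.le hGbd ξ) - ξ := rfl
      rw [hL, lp.coeFn_sub, Pi.sub_apply, WithLp.ofLp_sub, hΦ, MultFredholmAux.mulOpL_apply,
        MultFredholmAux.mv_eq]
      have hmm : (F g).mulVec ((G g).mulVec (ξ g)) = (F g * G g).mulVec (ξ g) :=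
        Matrix.mulVec_mulVec _ _ _
      rw [hmm]
      have hR : (-∑ h ∈ S, (lp.single 2 h (ξ h) :
          lp (fun _ : π => EuclideanSpace ℂ (Fin n)) 2)) g
          = -(if g ∈ S then ξ g else 0) := by
        simp only [lp.coeFn_neg, Pi.neg_apply, lp.coeFn_sum, Finset.sum_apply,
          lp.single_apply, Finset.sum_dite_eq, Pi.single_apply, Finset.sum_ite_eq]
      rw [hR]
      by_cases hg : g ∈ S
      · rw [if_pos hg]
        simp only [hGdef, if_pos hg, mul_zero, Matrix.zero_mulVec, zero_sub, WithLp.ofLp_neg]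
      · rw [if_neg hg]
        have hu : IsUnit (F g).det := (Matrix.isUnit_iff_isUnit_det _).mp (hS g hg).1
        simp only [hGdef, if_neg hg, Matrix.mul_nonsing_inv _ hu, Matrix.one_mulVec,
          sub_self, neg_zero, WithLp.ofLp_zero]
    rw [hkey]
    exact IsCompactOperator.neg (M₄ := lp (fun _ : π => EuclideanSpace ℂ (Fin n)) 2)
      (f := fun ξ : lp (fun _ : π => EuclideanSpace ℂ (Fin n)) 2 =>
        ∑ g ∈ S, lp.single 2 g (ξ g))
      (MultFredholmAux.isCompactOperator_sumSingle S)
  · have hkey : ⇑(MultFredholmAux.mulOpL G hCpos.le hGbd ∘L Φ -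
        ContinuousLinearMap.id ℂ (lp (fun _ : π => EuclideanSpace ℂ (Fin n)) 2)) =
        fun ξ => -∑ g ∈ S, lp.single 2 g (ξ g) := by
      funext ξ
      apply lp.ext
      funext g
      apply WithLp.ofLp_injective 2
      have hL : (MultFredholmAux.mulOpL G hCpos.le hGbd ∘L Φ -
          ContinuousLinearMap.id ℂ (lp (fun _ : π => EuclideanSpace ℂ (Fin n)) 2)) ξ =
          MultFredholmAux.mulOpL G hCpos.le hGbd (Φ ξ) - ξ := rfl
      rw [hL, lp.coeFn_sub, Pi.sub_apply, WithLp.ofLp_sub, MultFredholmAux.mulOpL_apply,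
        MultFredholmAux.mv_eq, hΦ]
      have hmm : (G g).mulVec ((F g).mulVec (ξ g)) = (G g * F g).mulVec (ξ g) :=
        Matrix.mulVec_mulVec _ _ _
      rw [hmm]
      have hR : (-∑ h ∈ S, (lp.single 2 h (ξ h) :
          lp (fun _ : π => EuclideanSpace ℂ (Fin n)) 2)) g
          = -(if g ∈ S then ξ g else 0) := by
        simp only [lp.coeFn_neg, Pi.neg_apply, lp.coeFn_sum, Finset.sum_apply,
          lp.single_apply, Finset.sum_dite_eq, Pi.single_apply, Finset.sum_ite_eq]
      rw [hR]
      by_cases hg : g ∈ S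
      · rw [if_pos hg]
        simp only [hGdef, if_pos hg, zero_mul, Matrix.zero_mulVec, zero_sub, WithLp.ofLp_neg]
      · rw [if_neg hg]
        have hu : IsUnit (F g).det := (Matrix.isUnit_iff_isUnit_det _).mp (hS g hg).1
        simp only [hGdef, if_neg hg, Matrix.nonsing_inv_mul _ hu, Matrix.one_mulVec,
          sub_self, neg_zero, WithLp.ofLp_zero]
    rw [hkey]
    exact IsCompactOperator.neg (M₄ := lp (fun _ : π => EuclideanSpace ℂ (Fin n)) 2)
      (f := fun ξ : lp (fun _ : π => EuclideanSpace ℂ (Fin n)) 2 =>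
        ∑ g ∈ S, lp.single 2 g (ξ g))
      (MultFredholmAux.isCompactOperator_sumSingle S)
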